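/- Let G be a finite type and δ : G → G → ℝ be symmetric and nonpositive. Then f is submodular in the diminishing-returns sense: for all finite subsets A ⊆ B of G and every x ∈ G with x ∉ B, f(A ∪ {x}) − f(A) ≥ f(B ∪ {x}) − f(B). -/
import Mathlib


open Finset

/-- The removal-set objective:
`f E = ∑_{i ∈ G \ E} ∑_{j ∈ G \ E} δ i j − ∑_{i ∈ G} ∑_{j ∈ G} δ i j`. -/
def removalObj {G : Type*} [Fintype G] [DecidableEq G] (δ : G → G → ℝ) (E : Finset G) : ℝ :=
  (∑ i ∈ Eᶜ, ∑ j ∈ Eᶜ, δ i j) - ∑ i : G, ∑ j : G, δ i j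

lemma removalObj_marginal {G : Type*} [Fintype G] [DecidableEq G] (δ : G → G → ℝ)
    (hsymm : ∀ i j, δ i j = δ j i) (E : Finset G) (x : G) (hx : x ∉ E) :
    removalObj δ (insert x E) - removalObj δ E
      = -(δ x x) - 2 * ∑ j ∈ Eᶜ.erase x, δ x j := by
  have hxc : x ∈ Eᶜ := by simpa using hx
  have hcompl : (insert x E)ᶜ = Eᶜ.erase x := by
    ext y; simp [Finset.mem_erase, and_comm]
  have hE : Eᶜ = insert x (Eᶜ.erase x) := (Finset.insert_erase hxc).symm
  have hne : x ∉ Eᶜ.erase x := Finset.notMem_erase _ _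
  rw [removalObj, removalObj, hcompl, hE]
  rw [Finset.sum_insert hne]
  rw [Finset.sum_insert hne]
  have : ∀ i ∈ Eᶜ.erase x, (∑ j ∈ insert x (Eᶜ.erase x), δ i j)
      = δ i x + ∑ j ∈ Eᶜ.erase x, δ i j := fun i _ => Finset.sum_insert hne
  rw [Finset.sum_congr rfl this, Finset.sum_add_distrib]
  have h2 : ∑ i ∈ Eᶜ.erase x, δ i x = ∑ j ∈ Eᶜ.erase x, δ x j := by
    exact Finset.sum_congr rfl fun i _ => hsymm i x
  rw [h2, Finset.erase_insert hne]
  ring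

theorem removalObj_submodular
    {G : Type*} [Fintype G] [DecidableEq G] (δ : G → G → ℝ)
    (hsymm : ∀ i j, δ i j = δ j i) (hnonpos : ∀ i j, δ i j ≤ 0)
    (A B : Finset G) (hAB : A ⊆ B) (x : G) (hx : x ∉ B) :
    removalObj δ (insert x A) - removalObj δ A
      ≥ removalObj δ (insert x B) - removalObj δ B := by
  have hxA : x ∉ A := fun h => hx (hAB h)
  rw [removalObj_marginal δ hsymm A x hxA, removalObj_marginal δ hsymm B x hx]
  have hsub : Bᶜ.erase x ⊆ Aᶜ.erase x := by
    intro y hy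
    simp only [Finset.mem_erase, Finset.mem_compl] at *
    exact ⟨hy.1, fun h => hy.2 (hAB h)⟩
  have : ∑ j ∈ Aᶜ.erase x, δ x j ≤ ∑ j ∈ Bᶜ.erase x, δ x j := by
    have := Finset.sum_le_sum_of_subset_of_nonneg hsub
      (fun j _ _ => neg_nonneg.mpr (hnonpos x j)) (f := fun j => -δ x j)
    simpa using this
  linarith
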